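/- Let L̂ : ℝ^d → ℝ be a convex differentiable function and let w(·) be the gradient flow of L̂ started at the origin. Fix T ≥ 0, and let w* be any vector with L̂(w*) ≤ L̂(w(T)). Then sup_{t ∈ [0,T]} ‖w(t)‖ ≤ 2‖w*‖. -/

import Mathlib

open scoped RealInnerProductSpace

lemma grad_first_order {d : ℕ} (L : EuclideanSpace ℝ (Fin d) → ℝ)
    (hLconv : ConvexOn ℝ Set.univ L) (hLdiff : Differentiable ℝ L)
    (x y : EuclideanSpace ℝ (Fin d)) :
    ⟪gradient L x, y - x⟫ ≤ L y - L x := by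
  set φ : ℝ → ℝ := fun s => L (x + s • (y - x)) with hφ
  have hline : ∀ s : ℝ, HasDerivAt (fun s : ℝ => x + s • (y - x)) (y - x) s := by
    intro s
    simpa using ((hasDerivAt_id s).smul_const (y - x)).const_add x
  have hgrad : HasFDerivAt L
      ((InnerProductSpace.toDual ℝ _) (gradient L x)) (x + (0:ℝ) • (y - x)) := by
    have := hasGradientAt_iff_hasFDerivAt.mp (hLdiff (x + (0:ℝ) • (y - x))).hasGradientAt
    simpa using this
  have hφd : HasDerivAt φ ⟪gradient L x, y - x⟫ 0 := by
    have := hgrad.comp_hasDerivAt 0 (hline 0)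
    simpa [hφ, InnerProductSpace.toDual_apply_apply, Function.comp_def] using this
  have hφc : ConvexOn ℝ Set.univ φ := by
    have := hLconv.comp_affineMap (AffineMap.lineMap x y)
    have heq : φ = L ∘ (AffineMap.lineMap x y) := by
      funext s
      simp [hφ, AffineMap.lineMap_apply, add_comm]
    rw [heq]
    simpa using this
  have hs := hφc.le_slope_of_hasDerivAt (Set.mem_univ (0:ℝ)) (Set.mem_univ (1:ℝ))
    one_pos hφd
  have : slope φ 0 1 = L y - L x := by
    simp [slope_def_field, hφ]
  linarith [hs, this.symm ▸ hs]

theorem stmt_1 {d : ℕ}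
    (L : EuclideanSpace ℝ (Fin d) → ℝ)
    (hLconv : ConvexOn ℝ Set.univ L)
    (hLdiff : Differentiable ℝ L)
    (w : ℝ → EuclideanSpace ℝ (Fin d))
    (hw0 : w 0 = 0)
    (hflow : ∀ t : ℝ, 0 ≤ t → HasDerivAt w (-(gradient L (w t))) t)
    (T : ℝ) (hT : 0 ≤ T)
    (ws : EuclideanSpace ℝ (Fin d))
    (hws : L ws ≤ L (w T)) :
    ∀ t ∈ Set.Icc (0 : ℝ) T, ‖w t‖ ≤ 2 * ‖ws‖ := by
  intro t ht
  -- L ∘ w is antitone on [0, ∞)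
  have hLw : ∀ s : ℝ, 0 ≤ s →
      HasDerivAt (fun u => L (w u)) (-‖gradient L (w s)‖ ^ 2) s := by
    intro s hs
    have hgrad : HasFDerivAt L
        ((InnerProductSpace.toDual ℝ _) (gradient L (w s))) (w s) :=
      hasGradientAt_iff_hasFDerivAt.mp (hLdiff (w s)).hasGradientAt
    have h := hgrad.comp_hasDerivAt s (hflow s hs)
    have heq : ((InnerProductSpace.toDual ℝ _) (gradient L (w s))) (-(gradient L (w s)))
        = -‖gradient L (w s)‖ ^ 2 := by
      rw [InnerProductSpace.toDual_apply_apply, inner_neg_right, real_inner_self_eq_norm_sq]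
    rw [heq] at h
    exact h
  have hanti : AntitoneOn (fun u => L (w u)) (Set.Ici 0) := by
    apply antitoneOn_of_deriv_nonpos (convex_Ici 0)
    · exact fun s hs => ((hLw s hs).continuousAt).continuousWithinAt
    · intro s hs
      rw [interior_Ici] at hs
      exact ((hLw s (le_of_lt hs)).differentiableAt).differentiableWithinAt
    · intro s hs
      rw [interior_Ici] at hs
      rw [(hLw s (le_of_lt hs)).deriv]
      simp [sq_nonneg]
  -- hence L (w s) ≥ L ws for s ∈ [0, T]
  have hLlow : ∀ s ∈ Set.Icc (0:ℝ) T, L ws ≤ L (w s) := fun s hs =>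
    le_trans hws (hanti hs.1 (le_trans hs.1 hs.2 : (0:ℝ) ≤ T) hs.2)
  -- g u = ⟪w u - ws, w u - ws⟫ is antitone on [0, T]
  set g : ℝ → ℝ := fun u => ⟪w u - ws, w u - ws⟫ with hg
  have hgd : ∀ s : ℝ, 0 ≤ s → HasDerivAt g
      (2 * ⟪gradient L (w s), ws - w s⟫) s := by
    intro s hs
    have hd : HasDerivAt (fun u => w u - ws) (-(gradient L (w s))) s :=
      (hflow s hs).sub_const ws
    have := hd.inner ℝ hd
    have k1 : ⟪w s - ws, -(gradient L (w s))⟫ = ⟪gradient L (w s), ws - w s⟫ := by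
      rw [inner_neg_right, real_inner_comm, ← inner_neg_right, neg_sub]
    have k2 : ⟪-(gradient L (w s)), w s - ws⟫ = ⟪gradient L (w s), ws - w s⟫ := by
      rw [real_inner_comm]
      exact k1
    rw [k1, k2] at this
    have h2 : ⟪gradient L (w s), ws - w s⟫ + ⟪gradient L (w s), ws - w s⟫
        = 2 * ⟪gradient L (w s), ws - w s⟫ := by ring
    rw [h2] at this
    exact this
  have hganti : AntitoneOn g (Set.Icc 0 T) := by
    apply antitoneOn_of_deriv_nonpos (convex_Icc 0 T)
    · exact fun s hs => ((hgd s hs.1).continuousAt).continuousWithinAt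
    · intro s hs
      rw [interior_Icc] at hs
      exact ((hgd s hs.1.le).differentiableAt).differentiableWithinAt
    · intro s hs
      rw [interior_Icc] at hs
      rw [(hgd s hs.1.le).deriv]
      have h1 : ⟪gradient L (w s), ws - w s⟫ ≤ L ws - L (w s) :=
        grad_first_order L hLconv hLdiff (w s) ws
      have h2 : L ws ≤ L (w s) := hLlow s ⟨hs.1.le, hs.2.le⟩
      nlinarith
  have hgle : g t ≤ g 0 := hganti (Set.left_mem_Icc.mpr hT) ht ht.1
  have hg0 : g 0 = ‖ws‖ ^ 2 := by
    show ⟪w 0 - ws, w 0 - ws⟫ = ‖ws‖ ^ 2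
    rw [hw0, zero_sub, real_inner_self_eq_norm_sq, norm_neg]
  have hgt : g t = ‖w t - ws‖ ^ 2 := real_inner_self_eq_norm_sq _
  have hnorm : ‖w t - ws‖ ≤ ‖ws‖ := by
    have := hgle
    rw [hg0, hgt] at this
    nlinarith [norm_nonneg (w t - ws), norm_nonneg ws]
  calc ‖w t‖ = ‖(w t - ws) + ws‖ := by rw [sub_add_cancel]
    _ ≤ ‖w t - ws‖ + ‖ws‖ := norm_add_le _ _
    _ ≤ 2 * ‖ws‖ := by linarith
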